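/- Gross-Pitaevskii violation of momentum conservation (Eq. (41) of the paper): let σ₀ > 0, x₀, p₀ ∈ ℝ and define φ : ℝ → ℂ by φ(x) = (π σ₀²)^{−1/4} exp(−(x−x₀)²/(2σ₀²)) · exp(i p₀ x²). Then Im ∫_ℝ conj(φ(x)) · |φ(x)|² · (−φ''(x)) dx = −p₀ / √(2π σ₀²). By d/dt⟨A²⟩_GP = −2Nλ Im⟨φ| |φ|² a² |φ⟩ this yields d/dt⟨P²⟩_GP = N λ · 2 p₀ / √(2π σ₀²) ≠ 0 whenever λ p₀ ≠ 0, an explicit violation of total momentum conservation ([H,P] = 0 in free space) by the Gross-Pitaevskii mean field. -/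

import Mathlib

open Real Complex MeasureTheory

lemma gp_int_sq_exp {b : ℝ} (hb : 0 < b) :
    Integrable fun x : ℝ => x ^ 2 * Real.exp (-b * x ^ 2) := by
  have := integrable_rpow_mul_exp_neg_mul_sq hb (by norm_num : (-1:ℝ) < 2)
  simpa [Real.rpow_natCast] using this

lemma gp_moment1 {b : ℝ} (hb : 0 < b) :
    ∫ x : ℝ, x * Real.exp (-b * x ^ 2) = 0 := by
  have hderiv : ∀ x : ℝ, HasDerivAt (fun x : ℝ => -(1/(2*b)) * Real.exp (-b * x ^ 2))
      (x * Real.exp (-b * x ^ 2)) x := by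
    intro x
    have h1 : HasDerivAt (fun x : ℝ => -b * x ^ 2) (-b * (2 * x)) x := by
      simpa using ((hasDerivAt_pow 2 x).const_mul (-b))
    have := (h1.exp).const_mul (-(1/(2*b)))
    convert this using 1
    all_goals try rfl
    field_simp [hb.ne']
  exact integral_eq_zero_of_hasDerivAt_of_integrable hderiv
    (integrable_mul_exp_neg_mul_sq hb)
    ((integrable_exp_neg_mul_sq hb).const_mul _)

lemma gp_moment2 {b : ℝ} (hb : 0 < b) :
    ∫ x : ℝ, x ^ 2 * Real.exp (-b * x ^ 2) = (1/(2*b)) * Real.sqrt (π / b) := by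
  have hderiv : ∀ x : ℝ, HasDerivAt (fun x : ℝ => x * Real.exp (-b * x ^ 2))
      (Real.exp (-b * x ^ 2) - 2*b*(x ^ 2 * Real.exp (-b * x ^ 2))) x := by
    intro x
    have h1 : HasDerivAt (fun x : ℝ => -b * x ^ 2) (-b * (2 * x)) x := by
      simpa using ((hasDerivAt_pow 2 x).const_mul (-b))
    have := (hasDerivAt_id x).mul h1.exp
    convert this using 1
    all_goals try rfl
    simp only [id]
    ring
  have hint : Integrable fun x : ℝ =>
      Real.exp (-b * x ^ 2) - 2*b*(x ^ 2 * Real.exp (-b * x ^ 2)) :=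
    (integrable_exp_neg_mul_sq hb).sub ((gp_int_sq_exp hb).const_mul _)
  have h0 := integral_eq_zero_of_hasDerivAt_of_integrable hderiv hint
    (integrable_mul_exp_neg_mul_sq hb)
  rw [integral_sub (integrable_exp_neg_mul_sq hb) ((gp_int_sq_exp hb).const_mul _),
    integral_gaussian, integral_const_mul] at h0
  have hb' : (2*b) ≠ 0 := by positivity
  field_simp at h0 ⊢
  linarith

/-- Integrability of a quadratic polynomial times a shifted gaussian. -/
lemma gp_integrable_poly_gauss {B : ℝ} (hB : 0 < B) (x₀ c0 c1 c2 : ℝ) :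
    Integrable fun x : ℝ => (c0 + c1*x + c2*x^2) * Real.exp (-B * (x - x₀)^2) := by
  have h : Integrable fun u : ℝ =>
      (c0 + c1*(u + x₀) + c2*(u + x₀)^2) * Real.exp (-B * u^2) := by
    have heq : (fun u : ℝ => (c0 + c1*(u + x₀) + c2*(u + x₀)^2) * Real.exp (-B * u^2))
        = fun u : ℝ => (c0 + c1*x₀ + c2*x₀^2) * Real.exp (-B * u^2)
          + (c1 + 2*c2*x₀) * (u * Real.exp (-B * u^2))
          + c2 * (u^2 * Real.exp (-B * u^2)) := by
      funext u; ring
    rw [heq]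
    exact (((integrable_exp_neg_mul_sq hB).const_mul _).add
      ((integrable_mul_exp_neg_mul_sq hB).const_mul _)).add ((gp_int_sq_exp hB).const_mul _)
  have := h.comp_sub_right x₀
  simpa [sub_add_cancel] using this

/-- The core real integral. -/
lemma gp_core (σ₀ x₀ p₀ : ℝ) (hσ : 0 < σ₀) :
    ∫ x : ℝ, Real.exp (-(2/σ₀^2) * (x - x₀)^2) * (2*p₀ - 4*p₀*x*(x-x₀)/σ₀^2)
      = p₀ * Real.sqrt (π * σ₀^2 / 2) := by
  have hB : 0 < 2/σ₀^2 := by positivity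
  have hσ2 : σ₀^2 ≠ 0 := by positivity
  set B := 2/σ₀^2 with hBdef
  have step1 : (fun x : ℝ => Real.exp (-B * (x - x₀)^2) * (2*p₀ - 4*p₀*x*(x-x₀)/σ₀^2))
      = fun x : ℝ => (fun u : ℝ => Real.exp (-B * u^2) * (2*p₀ - 4*p₀*(u+x₀)*u/σ₀^2)) (x - x₀) := by
    funext x; simp only []; rw [sub_add_cancel]
  rw [step1, integral_sub_right_eq_self (fun u : ℝ => Real.exp (-B * u^2) * (2*p₀ - 4*p₀*(u+x₀)*u/σ₀^2)) x₀]
  have expand : (fun u : ℝ => Real.exp (-B * u^2) * (2*p₀ - 4*p₀*(u+x₀)*u/σ₀^2))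
      = fun u : ℝ => (2*p₀) * Real.exp (-B * u^2)
        + (-(4*p₀*x₀/σ₀^2)) * (u * Real.exp (-B * u^2))
        + (-(4*p₀/σ₀^2)) * (u^2 * Real.exp (-B * u^2)) := by
    funext u; field_simp; ring
  rw [expand]
  have I1 : Integrable fun u : ℝ => (2*p₀) * Real.exp (-B * u^2)
      + (-(4*p₀*x₀/σ₀^2)) * (u * Real.exp (-B * u^2)) :=
    ((integrable_exp_neg_mul_sq hB).const_mul _).add
      ((integrable_mul_exp_neg_mul_sq hB).const_mul _)
  rw [integral_add I1 ((gp_int_sq_exp hB).const_mul _),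
    integral_add ((integrable_exp_neg_mul_sq hB).const_mul _)
      ((integrable_mul_exp_neg_mul_sq hB).const_mul _)]
  rw [integral_const_mul, integral_const_mul, integral_const_mul, integral_gaussian,
    gp_moment1 hB, gp_moment2 hB]
  have hπB : π / B = π * σ₀^2/2 := by rw [hBdef]; field_simp
  rw [hπB]
  have hsq : Real.sqrt (π * σ₀^2/2) ≥ 0 := Real.sqrt_nonneg _
  rw [hBdef]
  field_simp
  ring

/-- **Gross-Pitaevskii violation of momentum conservation (Eq. (41)).**
For the momentum-chirped Gaussian orbital,
`Im ⟪φ, |φ|² p² φ⟫ = -p₀ / √(2π σ₀²)` with `(p² φ)(x) = -φ''(x)`, so that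
`d/dt ⟨P²⟩_GP = 2 N λ p₀ / √(2π σ₀²) ≠ 0` whenever `λ p₀ ≠ 0`. -/
theorem gp_violation_momentum_squared
    (σ₀ x₀ p₀ : ℝ) (hσ : 0 < σ₀) (φ : ℝ → ℂ)
    (hφ : ∀ x : ℝ, φ x =
      (((π * σ₀ ^ 2) ^ (-(1 / 4 : ℝ)) : ℝ) : ℂ)
        * Complex.exp (-((x - x₀ : ℝ) : ℂ) ^ 2 / (2 * (σ₀ : ℂ) ^ 2))
        * Complex.exp (Complex.I * (p₀ : ℂ) * (x : ℂ) ^ 2)) :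
    (∫ x : ℝ, (starRingEnd ℂ) (φ x) * (‖φ x‖ ^ 2 : ℂ)
        * (-(deriv (deriv φ) x))).im
      = -p₀ / Real.sqrt (2 * π * σ₀ ^ 2) := by
  have hσ2 : (σ₀:ℝ)^2 ≠ 0 := by positivity
  have hσC : ((σ₀:ℂ))^2 ≠ 0 := by
    simpa using pow_ne_zero 2 (Complex.ofReal_ne_zero.mpr hσ.ne')
  have hσ0 : σ₀ ≠ 0 := ne_of_gt hσ
  have hσ0C : (σ₀:ℂ) ≠ 0 := Complex.ofReal_ne_zero.mpr hσ0
  set c : ℝ := (π * σ₀ ^ 2) ^ (-(1 / 4 : ℝ)) with hcdef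
  have hc : 0 < c := Real.rpow_pos_of_pos (by positivity) _
  -- normalized form of φ
  have hre : ∀ x : ℝ, HasDerivAt (fun t : ℝ => (t:ℂ)) 1 x := fun x => by
    simpa using (hasDerivAt_id x).ofReal_comp
  set g : ℝ → ℂ := fun x => -((x:ℂ) - x₀)^2/(2*(σ₀:ℂ)^2) + Complex.I*p₀*(x:ℂ)^2 with hgdef
  have hφn : φ = fun x : ℝ => (c:ℂ) * Complex.exp (g x) := by
    funext x
    rw [hφ x, mul_assoc, ← Complex.exp_add, hgdef]
    push_cast
    ring_nf
  -- first derivative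
  set a : ℝ → ℝ := fun x => -(x - x₀)/σ₀^2 with hadef
  set bb : ℝ → ℝ := fun x => 2*p₀*x with hbdef
  set q' : ℝ → ℂ := fun x => ((a x : ℝ):ℂ) + ((bb x : ℝ):ℂ)*Complex.I with hq'def
  set q'' : ℂ := ((-1/σ₀^2 : ℝ):ℂ) + ((2*p₀ : ℝ):ℂ)*Complex.I with hq''def
  have hg' : ∀ x : ℝ, HasDerivAt g (q' x) x := by
    intro x
    have h1 : HasDerivAt (fun z : ℂ => -(z - (x₀:ℂ))^2/(2*(σ₀:ℂ)^2) + Complex.I*(p₀:ℂ)*z^2)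
        (-(2*((x:ℂ) - x₀)^1*1)/(2*(σ₀:ℂ)^2) + Complex.I*(p₀:ℂ)*(2*(x:ℂ)^1)) ((x:ℂ)) := by
      have ha := ((((hasDerivAt_id ((x:ℂ))).sub_const ((x₀:ℂ))).pow 2).neg).div_const
        (2*(σ₀:ℂ)^2)
      have hb := (hasDerivAt_pow 2 ((x:ℂ))).const_mul (Complex.I*(p₀:ℂ))
      have hab := ha.add hb
      convert hab using 1
      all_goals try rfl
      all_goals norm_num
    have h2 := h1.comp_ofReal
    convert h2 using 1
    simp only [hq'def, hadef, hbdef]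
    push_cast
    field_simp
  have hd1 : ∀ x : ℝ, HasDerivAt φ (φ x * q' x) x := by
    intro x
    rw [hφn]
    have := ((hg' x).cexp).const_mul (c:ℂ)
    convert this using 1
    all_goals try rfl
    ring
  have hq'd : ∀ x : ℝ, HasDerivAt q' q'' x := by
    intro x
    have h1 : HasDerivAt (fun z : ℂ => -(z - (x₀:ℂ))/(σ₀:ℂ)^2 + 2*Complex.I*(p₀:ℂ)*z)
        (-1/(σ₀:ℂ)^2 + 2*Complex.I*(p₀:ℂ)) ((x:ℂ)) := by
      have ha := (((hasDerivAt_id ((x:ℂ))).sub_const ((x₀:ℂ))).neg).div_const ((σ₀:ℂ)^2)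
      have hb := (hasDerivAt_id ((x:ℂ))).const_mul (2*Complex.I*(p₀:ℂ))
      have hab := ha.add hb
      convert hab using 1
      all_goals try rfl
      ring
    have h2 := h1.comp_ofReal
    have hfn : q' = fun y : ℝ => -((y:ℂ) - (x₀:ℂ))/(σ₀:ℂ)^2 + 2*Complex.I*(p₀:ℂ)*(y:ℂ) := by
      funext y
      simp only [hq'def, hadef, hbdef]
      push_cast
      field_simp
    rw [hfn, hq''def]
    convert h2 using 1
    push_cast
    ring
  have hd2 : ∀ x : ℝ, deriv (deriv φ) x = φ x * q' x * q' x + φ x * q'' := by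
    intro x
    have hz : deriv φ = fun y => φ y * q' y := funext fun y => (hd1 y).deriv
    rw [hz]
    exact (((hd1 x).mul (hq'd x))).deriv
  -- norm of φ
  set E : ℝ → ℝ := fun x => c * Real.exp (-(x - x₀)^2/(2*σ₀^2)) with hEdef
  have hnorm : ∀ x : ℝ, ‖φ x‖ = E x := by
    intro x
    rw [hφ x, hEdef]
    rw [norm_mul, norm_mul]
    simp only [Complex.norm_real, Real.norm_eq_abs, Complex.norm_exp]
    have h1 : (-((x - x₀ : ℝ) : ℂ) ^ 2 / (2 * (σ₀ : ℂ) ^ 2)).re = -(x - x₀)^2/(2*σ₀^2) := by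
      have : (-((x - x₀ : ℝ) : ℂ) ^ 2 / (2 * (σ₀ : ℂ) ^ 2))
          = ((-(x - x₀)^2/(2*σ₀^2) : ℝ) : ℂ) := by push_cast; ring
      rw [this, Complex.ofReal_re]
    have h2 : (Complex.I * (p₀:ℂ) * (x:ℂ)^2).re = 0 := by
      have heq : (Complex.I * (p₀:ℂ) * (x:ℂ)^2) = ((p₀*x^2 : ℝ):ℂ) * Complex.I := by
        push_cast; ring
      rw [heq, Complex.mul_I_re, Complex.ofReal_im, neg_zero]
    rw [h1, h2, Real.exp_zero, mul_one, abs_of_pos hc]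
  -- pointwise integrand identity
  have hpt : ∀ x : ℝ, (starRingEnd ℂ) (φ x) * (‖φ x‖ ^ 2 : ℂ) * (-(deriv (deriv φ) x))
      = -(((E x)^4 : ℝ):ℂ) * (q' x^2 + q'') := by
    intro x
    rw [hd2 x, hnorm x]
    have hconj : (starRingEnd ℂ) (φ x) * φ x = (((E x)^2 : ℝ):ℂ) := by
      rw [mul_comm, Complex.mul_conj, Complex.normSq_eq_norm_sq, hnorm x]
      try push_cast
      try ring
    have expand : (starRingEnd ℂ) (φ x) * ((E x : ℝ):ℂ)^2 * (-(φ x * q' x * q' x + φ x * q''))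
        = ((starRingEnd ℂ) (φ x) * φ x) * ((E x : ℝ):ℂ)^2 * (-(q' x^2 + q'')) := by ring
    rw [expand, hconj]
    push_cast
    try ring
  simp only [hpt]
  -- decompose into real and imaginary parts
  set u : ℝ → ℝ := fun x => -(E x)^4 * ((a x)^2 - (bb x)^2 + (-1/σ₀^2)) with hudef
  set v : ℝ → ℝ := fun x => -(E x)^4 * (2*(a x)*(bb x) + 2*p₀) with hvdef
  have hdecomp : ∀ x : ℝ, -(((E x)^4 : ℝ):ℂ) * (q' x^2 + q'')
      = ((u x : ℝ):ℂ) + ((v x : ℝ):ℂ)*Complex.I := by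
    intro x
    simp only [hq'def, hq''def, hudef, hvdef]
    push_cast
    linear_combination (-(((E x : ℝ):ℂ))^4*(((bb x : ℝ):ℂ))^2) * Complex.I_sq
  -- E x ^ 4 in gaussian form
  have hB : (0:ℝ) < 2/σ₀^2 := by positivity
  have hE4 : ∀ x : ℝ, (E x)^4 = c^4 * Real.exp (-(2/σ₀^2) * (x - x₀)^2) := by
    intro x
    rw [hEdef]
    rw [mul_pow, ← Real.exp_nat_mul]
    congr 2
    push_cast
    field_simp
    ring
  -- integrability of u and v
  have hu : Integrable u := by
    have := gp_integrable_poly_gauss hB x₀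
      (-(c^4) * (x₀^2/σ₀^4 - 1/σ₀^2)) (-(c^4) * (-2*x₀/σ₀^4)) (-(c^4) * (1/σ₀^4 - 4*p₀^2))
    refine this.congr (Filter.Eventually.of_forall fun x => ?_)
    simp only [hudef, hadef, hbdef]
    rw [hE4 x]
    field_simp
    ring
  have hv : Integrable v := by
    have := gp_integrable_poly_gauss hB x₀
      (-(c^4) * (2*p₀)) (-(c^4) * (4*p₀*x₀/σ₀^2)) (-(c^4) * (-4*p₀/σ₀^2))
    refine this.congr (Filter.Eventually.of_forall fun x => ?_)
    simp only [hvdef, hadef, hbdef]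
    rw [hE4 x]
    field_simp
    ring
  -- compute the integral
  simp only [hdecomp]
  have hint : Integrable (fun x : ℝ => ((u x:ℝ):ℂ) + ((v x:ℝ):ℂ)*Complex.I) :=
    hu.ofReal.add (hv.ofReal.mul_const _)
  have him := integral_im (μ := volume) hint
  simp only [RCLike.im_to_complex] at him
  rw [← him]
  have hptim : (fun x : ℝ => (((u x:ℝ):ℂ) + ((v x:ℝ):ℂ)*Complex.I).im) = v := by
    funext x
    simp [Complex.add_im, Complex.ofReal_im, Complex.mul_I_im, Complex.ofReal_re]
  rw [hptim]
  -- evaluate ∫ v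
  have hvval : ∫ x, v x = -(c^4) * (p₀ * Real.sqrt (π * σ₀^2 / 2)) := by
    have heq : v = fun x => (-(c^4)) * (Real.exp (-(2/σ₀^2) * (x - x₀)^2)
        * (2*p₀ - 4*p₀*x*(x-x₀)/σ₀^2)) := by
      funext x
      simp only [hvdef, hadef, hbdef]
      rw [hE4 x]
      field_simp
      ring
    rw [heq, integral_const_mul, gp_core σ₀ x₀ p₀ hσ]
  rw [hvval]
  -- final arithmetic
  have hc4 : c^4 = (π * σ₀^2)⁻¹ := by
    rw [hcdef, ← Real.rpow_natCast ((π * σ₀ ^ 2) ^ (-(1 / 4 : ℝ))) 4,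
      ← Real.rpow_mul (by positivity)]
    have h4 : (-(1 / 4 : ℝ)) * ((4:ℕ):ℝ) = -1 := by norm_num
    rw [h4, Real.rpow_neg_one]
  rw [hc4]
  have hkey : Real.sqrt (π*σ₀^2/2) * Real.sqrt (2*π*σ₀^2) = π*σ₀^2 := by
    rw [← Real.sqrt_mul (by positivity)]
    rw [show (π*σ₀^2/2)*(2*π*σ₀^2) = (π*σ₀^2)^2 by ring]
    exact Real.sqrt_sq (by positivity)
  have hs2 : Real.sqrt (2*π*σ₀^2) ≠ 0 := (Real.sqrt_pos.mpr (by positivity)).ne'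
  rw [eq_div_iff hs2]
  have hπσ : π*σ₀^2 ≠ 0 := by positivity
  field_simp
  have hkey' : Real.sqrt (π*σ₀^2/2) * Real.sqrt (π*σ₀^2*2) = π*σ₀^2 := by
    rw [show π*σ₀^2*2 = 2*π*σ₀^2 by ring]; exact hkey
  linear_combination (-p₀) * hkey'
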